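/- For τ in the upper half plane with q = e^{2πiτ}, the partial theta function satisfies ∑_{n≥1} q^{n^2} = -∫_{-1/2}^{1/2} e^{4πit} A_2(t - τ/2, 0; τ) dt, where A_2(w,z;τ) = e^{2πiw} ∑_{n∈ℤ} q^{n(n+1)} e^{2πinz} / (1 - e^{2πiw} q^n) is the level 2 Appell–Lerch sum. -/

import Mathlib

open Real

/-- The Appell–Lerch sum of level 2 at `z = 0`:
`A_2(w,0;τ) = e^{2πiw} ∑_{n∈ℤ} q^{n(n+1)} / (1 - e^{2πiw} q^n)` with `q = e^{2πiτ}`. -/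
noncomputable def appellLerch2 (w τ : ℂ) : ℂ :=
  Complex.exp (2 * (π : ℂ) * Complex.I * w) *
    ∑' n : ℤ, Complex.exp (2 * (π : ℂ) * Complex.I * τ) ^ (n * (n + 1)) /
      (1 - Complex.exp (2 * (π : ℂ) * Complex.I * w) *
        Complex.exp (2 * (π : ℂ) * Complex.I * τ) ^ n)

/-! ### Auxiliary lemmas -/

lemma hasDerivAt_cexp_real (a : ℂ) (t : ℝ) :
    HasDerivAt (fun s : ℝ => Complex.exp (a * s)) (a * Complex.exp (a * t)) t := by
  have h : HasDerivAt (fun z : ℂ => Complex.exp (a * z)) (Complex.exp (a * t) * (a * 1)) (t : ℂ) :=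
    ((hasDerivAt_id _).const_mul a).cexp
  simpa [mul_comm] using h.comp_ofReal

lemma one_sub_mem_slitPlane {z : ℂ} (hz : ‖z‖ < 1) :
    1 - z ∈ Complex.slitPlane := by
  have := Complex.mem_slitPlane_of_norm_lt_one (z := -z) (by simpa using hz)
  simpa [sub_eq_add_neg] using this

lemma one_sub_ne_zero_of_abs_lt {z : ℂ} (hz : ‖z‖ < 1) : 1 - z ≠ 0 := by
  intro h
  have h1 : z = 1 := by linear_combination -h
  rw [h1] at hz; simp at hz

lemma one_sub_ne_zero_of_abs_gt {z : ℂ} (hz : 1 < ‖z‖) : 1 - z ≠ 0 := by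
  intro h
  have h1 : z = 1 := by linear_combination -h
  rw [h1] at hz; simp at hz

lemma frac_id_lt (a c x : ℂ) (ha : a ≠ 0) (hc : c ≠ 0) (hE : 1 - c*x ≠ 0) :
    x^3/(1-c*x) = -(a*x*x + x*(a*x))/(2*a*c) - a*x/(a*c^2)
      - (a*c^3)⁻¹ * (-(c*(a*x))/(1-c*x)) := by
  rw [div_eq_iff hE, ← mul_div_assoc ((a*c^3)⁻¹), sub_mul, sub_mul, div_mul_cancel₀ _ hE]
  field_simp
  ring

lemma frac_id_gt (a c x : ℂ) (ha : a ≠ 0) (hc : c ≠ 0) (hx : x ≠ 0) (hE : 1 - c*x ≠ 0)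
    (hE2 : 1 - c⁻¹ * x⁻¹ ≠ 0) :
    x^3/(1-c*x) = -(a*x*x + x*(a*x))/(2*a*c) - a*x/(a*c^2) - 1/c^3
      - (a*c^3)⁻¹ * (-(c⁻¹ * (-a * x⁻¹))/(1 - c⁻¹*x⁻¹)) := by
  have hfrac : (-(c⁻¹ * (-a * x⁻¹)))/(1 - c⁻¹*x⁻¹) = (-a)/(1-c*x) := by
    rw [div_eq_div_iff hE2 hE]
    field_simp
    ring
  rw [hfrac, ← mul_div_assoc ((a*c^3)⁻¹),
    div_eq_iff hE, sub_mul, sub_mul, sub_mul, div_mul_cancel₀ _ hE]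
  field_simp
  ring

/-- The integral `∫ x³/(1-cx) dt` with `x = e^{at}` vanishes when `|c| < 1`. -/
lemma integral_cube_div_of_lt' (a c : ℂ) (ha0 : a ≠ 0) (hc0 : c ≠ 0)
    (habs : ∀ t : ℝ, ‖Complex.exp (a * t)‖ = 1)
    (hE : Complex.exp a = 1) (hc : ‖c‖ < 1) :
    ∫ t in (-(1:ℝ)/2)..(1/2),
      Complex.exp (a * t) ^ 3 / (1 - c * Complex.exp (a * t)) = 0 := by
  have habs' : ∀ t : ℝ, ‖c * Complex.exp (a * t)‖ < 1 := by
    intro t; rw [norm_mul, habs t, mul_one]; exact hc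
  have hden : ∀ t : ℝ, 1 - c * Complex.exp (a * t) ≠ 0 :=
    fun t => one_sub_ne_zero_of_abs_lt (habs' t)
  have hcontE : Continuous fun t : ℝ => Complex.exp (a * t) :=
    Complex.continuous_exp.comp (by continuity)
  have hcont : Continuous fun t : ℝ =>
      Complex.exp (a * t) ^ 3 / (1 - c * Complex.exp (a * t)) :=
    (hcontE.pow 3).div (continuous_const.sub (continuous_const.mul hcontE)) hden
  have hderiv : ∀ t : ℝ, HasDerivAt
      (fun t : ℝ => ((-(Complex.exp (a*t)*Complex.exp (a*t))) / (2*a*c) - Complex.exp (a*t)/(a*c^2))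
        - (a*c^3)⁻¹ * Complex.log (1 - c * Complex.exp (a*t)))
      (Complex.exp (a*t)^3 / (1 - c * Complex.exp (a*t))) t := by
    intro t
    have he := hasDerivAt_cexp_real a t
    have h1 := ((he.mul he).neg).div_const (2*a*c)
    have h2 := he.div_const (a*c^2)
    have hin : HasDerivAt (fun t : ℝ => 1 - c * Complex.exp (a*t))
        (-(c * (a * Complex.exp (a*t)))) t := (he.const_mul c).const_sub 1
    have h3 : HasDerivAt (fun t : ℝ => Complex.log (1 - c * Complex.exp (a*t)))
        ((-(c * (a * Complex.exp (a*t)))) / (1 - c * Complex.exp (a*t))) t :=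
      hin.clog_real (one_sub_mem_slitPlane (habs' t))
    have hsum := (h1.sub h2).sub (h3.const_mul ((a*c^3)⁻¹))
    rw [frac_id_lt a c _ ha0 hc0 (hden t)]
    exact hsum
  have key := intervalIntegral.integral_eq_sub_of_hasDerivAt
    (f := fun t : ℝ => ((-(Complex.exp (a*t)*Complex.exp (a*t))) / (2*a*c) - Complex.exp (a*t)/(a*c^2))
        - (a*c^3)⁻¹ * Complex.log (1 - c * Complex.exp (a*t)))
    (f' := fun t : ℝ => Complex.exp (a*t)^3 / (1 - c * Complex.exp (a*t)))
    (a := -(1:ℝ)/2) (b := 1/2)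
    (fun t _ => hderiv t) (hcont.intervalIntegrable _ _)
  rw [key]
  have hEq : Complex.exp (a * ((1/2 : ℝ) : ℂ)) = Complex.exp (a * ((-1/2 : ℝ) : ℂ)) := by
    calc Complex.exp (a * ((1/2 : ℝ) : ℂ))
        = Complex.exp (a * ((-1/2 : ℝ) : ℂ) + a) := by congr 1; push_cast; ring
      _ = Complex.exp (a * ((-1/2 : ℝ) : ℂ)) * Complex.exp a := Complex.exp_add _ _
      _ = _ := by rw [hE, mul_one]
  simp only [hEq]
  ring

/-- The integral `∫ x³/(1-cx) dt` with `x = e^{at}` equals `-c⁻³` when `|c| > 1`. -/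
lemma integral_cube_div_of_gt' (a c : ℂ) (ha0 : a ≠ 0)
    (habs : ∀ t : ℝ, ‖Complex.exp (a * t)‖ = 1)
    (hE : Complex.exp a = 1) (hc : 1 < ‖c‖) :
    ∫ t in (-(1:ℝ)/2)..(1/2),
      Complex.exp (a * t) ^ 3 / (1 - c * Complex.exp (a * t)) = -(c^3)⁻¹ := by
  have hc0 : c ≠ 0 := by
    intro h; rw [h] at hc; norm_num at hc
  have habs1 : ∀ t : ℝ, ‖c * Complex.exp (a * t)‖ > 1 := by
    intro t; rw [norm_mul, habs t, mul_one]; exact hc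
  have hden : ∀ t : ℝ, 1 - c * Complex.exp (a * t) ≠ 0 :=
    fun t => one_sub_ne_zero_of_abs_gt (habs1 t)
  have hy : ∀ t : ℝ, Complex.exp (-a * t) = (Complex.exp (a * t))⁻¹ := by
    intro t
    rw [show -a * (t:ℂ) = -(a * t) by ring, Complex.exp_neg]
  have habs2 : ∀ t : ℝ, ‖c⁻¹ * Complex.exp (-a * t)‖ < 1 := by
    intro t
    rw [norm_mul, norm_inv, hy t, norm_inv, habs t, inv_one, mul_one]
    exact inv_lt_one_of_one_lt₀ hc
  have hden2 : ∀ t : ℝ, 1 - c⁻¹ * Complex.exp (-a * t) ≠ 0 :=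
    fun t => one_sub_ne_zero_of_abs_lt (habs2 t)
  have hcontE : Continuous fun t : ℝ => Complex.exp (a * t) :=
    Complex.continuous_exp.comp (by continuity)
  have hcont : Continuous fun t : ℝ =>
      Complex.exp (a * t) ^ 3 / (1 - c * Complex.exp (a * t)) :=
    (hcontE.pow 3).div (continuous_const.sub (continuous_const.mul hcontE)) hden
  have hderiv : ∀ t : ℝ, HasDerivAt
      (fun t : ℝ => (((-(Complex.exp (a*t)*Complex.exp (a*t))) / (2*a*c) - Complex.exp (a*t)/(a*c^2))
          - ((t : ℝ) : ℂ)/c^3)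
        - (a*c^3)⁻¹ * Complex.log (1 - c⁻¹ * Complex.exp (-a * t)))
      (Complex.exp (a*t)^3 / (1 - c * Complex.exp (a*t))) t := by
    intro t
    have he := hasDerivAt_cexp_real a t
    have he' := hasDerivAt_cexp_real (-a) t
    have h1 := ((he.mul he).neg).div_const (2*a*c)
    have h2 := he.div_const (a*c^2)
    have hre : HasDerivAt (fun t : ℝ => ((t : ℝ) : ℂ)/c^3) ((1:ℂ)/c^3) t := by
      simpa using (Complex.ofRealCLM.hasDerivAt (x := t)).div_const (c^3)
    have hx : Complex.exp (a * t) ≠ 0 := Complex.exp_ne_zero _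
    have hin : HasDerivAt (fun t : ℝ => 1 - c⁻¹ * Complex.exp (-a * t))
        (-(c⁻¹ * (-a * Complex.exp (-a * t)))) t :=
      (he'.const_mul c⁻¹).const_sub 1
    have h3 : HasDerivAt (fun t : ℝ => Complex.log (1 - c⁻¹ * Complex.exp (-a * t)))
        ((-(c⁻¹ * (-a * Complex.exp (-a * t)))) / (1 - c⁻¹ * Complex.exp (-a * t))) t :=
      hin.clog_real (one_sub_mem_slitPlane (habs2 t))
    have hsum := ((h1.sub h2).sub hre).sub (h3.const_mul ((a*c^3)⁻¹))
    have hd2 := hden2 t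
    rw [hy t] at hd2 hsum
    rw [frac_id_gt a c _ ha0 hc0 hx (hden t) hd2]
    exact hsum
  have key := intervalIntegral.integral_eq_sub_of_hasDerivAt
    (f := fun t : ℝ => (((-(Complex.exp (a*t)*Complex.exp (a*t))) / (2*a*c) - Complex.exp (a*t)/(a*c^2))
          - ((t : ℝ) : ℂ)/c^3)
        - (a*c^3)⁻¹ * Complex.log (1 - c⁻¹ * Complex.exp (-a * t)))
    (f' := fun t : ℝ => Complex.exp (a*t)^3 / (1 - c * Complex.exp (a*t)))
    (a := -(1:ℝ)/2) (b := 1/2)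
    (fun t _ => hderiv t) (hcont.intervalIntegrable _ _)
  rw [key]
  have hEq : Complex.exp (a * ((1/2 : ℝ) : ℂ)) = Complex.exp (a * ((-1/2 : ℝ) : ℂ)) := by
    calc Complex.exp (a * ((1/2 : ℝ) : ℂ))
        = Complex.exp (a * ((-1/2 : ℝ) : ℂ) + a) := by congr 1; push_cast; ring
      _ = Complex.exp (a * ((-1/2 : ℝ) : ℂ)) * Complex.exp a := Complex.exp_add _ _
      _ = _ := by rw [hE, mul_one]
  have hE' : Complex.exp (-a) = 1 := by rw [Complex.exp_neg, hE, inv_one]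
  have hEq' : Complex.exp (-a * ((1/2 : ℝ) : ℂ)) = Complex.exp (-a * ((-1/2 : ℝ) : ℂ)) := by
    calc Complex.exp (-a * ((1/2 : ℝ) : ℂ))
        = Complex.exp (-a * ((-1/2 : ℝ) : ℂ) + -a) := by congr 1; push_cast; ring
      _ = Complex.exp (-a * ((-1/2 : ℝ) : ℂ)) * Complex.exp (-a) := Complex.exp_add _ _
      _ = _ := by rw [hE', mul_one]
  simp only [hEq, hEq']
  push_cast
  ring

lemma abs_exp_two_pi_I (t : ℝ) :
    ‖Complex.exp (2 * (π : ℂ) * Complex.I * t)‖ = 1 := by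
  rw [Complex.norm_exp]
  norm_num [Complex.mul_re]

lemma two_pi_I_ne : (2*(π:ℂ)*Complex.I) ≠ 0 := by simp [Complex.ext_iff, Real.pi_ne_zero]

/-! ### The summand of the Appell–Lerch sum -/

noncomputable def Fterm (τ : ℂ) (n : ℤ) (t : ℝ) : ℂ :=
  Complex.exp (4*(π:ℂ)*Complex.I*t) *
    (Complex.exp (2*(π:ℂ)*Complex.I*((t:ℂ) - τ/2)) *
      (Complex.exp (2*(π:ℂ)*Complex.I*τ) ^ (n*(n+1)) /
        (1 - Complex.exp (2*(π:ℂ)*Complex.I*((t:ℂ) - τ/2)) * Complex.exp (2*(π:ℂ)*Complex.I*τ) ^ n)))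

noncomputable def cc (τ : ℂ) (n : ℤ) : ℂ :=
  Complex.exp ((2*(n:ℂ)-1) * ((π:ℂ)*Complex.I*τ))

noncomputable def kk (τ : ℂ) (n : ℤ) : ℂ :=
  Complex.exp ((2*(n:ℂ)*((n:ℂ)+1)-1) * ((π:ℂ)*Complex.I*τ))

lemma Fterm_eq (τ : ℂ) (n : ℤ) (t : ℝ) :
    Fterm τ n t = kk τ n *
      (Complex.exp (2*(π:ℂ)*Complex.I*t)^3 /
        (1 - cc τ n * Complex.exp (2*(π:ℂ)*Complex.I*t))) := by
  unfold Fterm kk cc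
  rw [show Complex.exp (2*(π:ℂ)*Complex.I*((t:ℂ)-τ/2))
      = Complex.exp (2*(π:ℂ)*Complex.I*t) * Complex.exp (-((π:ℂ)*Complex.I*τ)) from by
    rw [← Complex.exp_add]; congr 1; ring]
  rw [show Complex.exp (2*(π:ℂ)*Complex.I*τ) ^ (n*(n+1))
      = Complex.exp (((n*(n+1) : ℤ) : ℂ) * (2*(π:ℂ)*Complex.I*τ)) from
    (Complex.exp_int_mul _ _).symm]
  rw [show Complex.exp (2*(π:ℂ)*Complex.I*τ) ^ n
      = Complex.exp (((n : ℤ) : ℂ) * (2*(π:ℂ)*Complex.I*τ)) from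
    (Complex.exp_int_mul _ _).symm]
  rw [show Complex.exp (4*(π:ℂ)*Complex.I*(t:ℂ))
      = Complex.exp (2*(π:ℂ)*Complex.I*t)^2 from by
    rw [← Complex.exp_nat_mul]; congr 1; push_cast; ring]
  rw [show Complex.exp ((2*(n:ℂ)*((n:ℂ)+1)-1) * ((π:ℂ)*Complex.I*τ))
      = Complex.exp (-((π:ℂ)*Complex.I*τ))
        * Complex.exp (((n*(n+1) : ℤ) : ℂ) * (2*(π:ℂ)*Complex.I*τ)) from by
    rw [← Complex.exp_add]; congr 1; push_cast; ring]
  rw [show Complex.exp ((2*(n:ℂ)-1) * ((π:ℂ)*Complex.I*τ))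
      = Complex.exp (-((π:ℂ)*Complex.I*τ))
        * Complex.exp (((n : ℤ) : ℂ) * (2*(π:ℂ)*Complex.I*τ)) from by
    rw [← Complex.exp_add]; congr 1; push_cast; ring]
  ring

lemma abs_cc (τ : ℂ) (n : ℤ) :
    ‖cc τ n‖ = Real.exp (-((2*(n:ℝ)-1) * (π * τ.im))) := by
  unfold cc
  rw [Complex.norm_exp]
  congr 1
  simp [Complex.mul_re, Complex.mul_im]

lemma abs_kk (τ : ℂ) (n : ℤ) :
    ‖kk τ n‖ = Real.exp (-((2*(n:ℝ)*((n:ℝ)+1)-1) * (π * τ.im))) := by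
  unfold kk
  rw [Complex.norm_exp]
  congr 1
  simp [Complex.mul_re, Complex.mul_im]

lemma integral_Fterm_pos (τ : ℂ) (hτ : 0 < τ.im) (n : ℤ) (hn : 1 ≤ n) :
    ∫ t in (-(1:ℝ)/2)..(1/2), Fterm τ n t = 0 := by
  simp_rw [Fterm_eq]
  rw [intervalIntegral.integral_const_mul,
    integral_cube_div_of_lt' (2*(π:ℂ)*Complex.I) (cc τ n) two_pi_I_ne
      (by unfold cc; exact Complex.exp_ne_zero _) abs_exp_two_pi_I
      Complex.exp_two_pi_mul_I ?_, mul_zero]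
  rw [abs_cc]
  apply Real.exp_lt_one_iff.mpr
  have h1 : (1:ℝ) ≤ (n:ℝ) := by exact_mod_cast hn
  have hp : 0 < π*τ.im := mul_pos Real.pi_pos hτ
  nlinarith [mul_pos (show (0:ℝ) < 2*(n:ℝ)-1 by linarith) hp]

lemma integral_Fterm_neg (τ : ℂ) (hτ : 0 < τ.im) (k : ℕ) :
    ∫ t in (-(1:ℝ)/2)..(1/2), Fterm τ (-(k:ℤ)) t
      = -(Complex.exp (2*(π:ℂ)*Complex.I*τ) ^ ((k+1)^2)) := by
  simp_rw [Fterm_eq]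
  rw [intervalIntegral.integral_const_mul,
    integral_cube_div_of_gt' (2*(π:ℂ)*Complex.I) (cc τ (-(k:ℤ))) two_pi_I_ne
      abs_exp_two_pi_I Complex.exp_two_pi_mul_I ?_]
  · have h3 : cc τ (-(k:ℤ)) ^ 3
        = Complex.exp (3 * ((2*((-(k:ℤ)):ℂ)-1) * ((π:ℂ)*Complex.I*τ))) := by
      unfold cc
      rw [← Complex.exp_nat_mul]
      norm_num
    rw [h3, ← Complex.exp_neg]
    unfold kk
    rw [mul_neg, ← Complex.exp_add]
    rw [show Complex.exp (2*(π:ℂ)*Complex.I*τ) ^ ((k+1)^2)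
        = Complex.exp ((((k+1)^2 : ℕ) : ℂ) * (2*(π:ℂ)*Complex.I*τ)) from
      (Complex.exp_nat_mul _ _).symm]
    congr 2
    push_cast
    ring
  · rw [abs_cc]
    apply Real.one_lt_exp_iff.mpr
    have h1 : (0:ℝ) ≤ (k:ℝ) := Nat.cast_nonneg k
    have hp : 0 < π*τ.im := mul_pos Real.pi_pos hτ
    push_cast
    nlinarith [mul_pos (show (0:ℝ) < 2*(k:ℝ)+1 by linarith) hp]

/-! ### Bounds -/

lemma two_n_sub_one_ne (n : ℤ) : (2*(n:ℝ)-1) ≠ 0 := by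
  intro h0
  have h1 : ((2*n-1 : ℤ) : ℝ) = 0 := by push_cast; linarith
  have h2 : (2*n-1 : ℤ) = 0 := by exact_mod_cast h1
  omega

lemma cc_x_ne (τ : ℂ) (hτ : 0 < τ.im) (n : ℤ) (t : ℝ) :
    1 - cc τ n * Complex.exp (2*(π:ℂ)*Complex.I*t) ≠ 0 := by
  intro h
  have h1 : cc τ n * Complex.exp (2*(π:ℂ)*Complex.I*t) = 1 := by linear_combination -h
  have habs : ‖cc τ n * Complex.exp (2*(π:ℂ)*Complex.I*t)‖ = 1 := by
    rw [h1, norm_one]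
  rw [norm_mul, abs_cc, abs_exp_two_pi_I, mul_one, Real.exp_eq_one_iff] at habs
  have hp : 0 < π*τ.im := mul_pos Real.pi_pos hτ
  rcases mul_eq_zero.mp (neg_eq_zero.mp habs) with h2 | h2
  · exact two_n_sub_one_ne n h2
  · exact hp.ne' h2

/-- Uniform lower bound for the denominators. -/
lemma denom_lower (τ : ℂ) (hτ : 0 < τ.im) (n : ℤ) (t : ℝ) :
    min (1 - Real.exp (-(π*τ.im))) (Real.exp (π*τ.im) - 1)
      ≤ ‖1 - cc τ n * Complex.exp (2*(π:ℂ)*Complex.I*t)‖ := by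
  have hp : 0 < π*τ.im := mul_pos Real.pi_pos hτ
  have habs : ‖cc τ n * Complex.exp (2*(π:ℂ)*Complex.I*t)‖
      = Real.exp (-((2*(n:ℝ)-1) * (π * τ.im))) := by
    rw [norm_mul, abs_cc, abs_exp_two_pi_I, mul_one]
  set z := cc τ n * Complex.exp (2*(π:ℂ)*Complex.I*t) with hz
  rcases le_or_gt 1 n with hn | hn
  · -- |z| ≤ exp(-πτ.im) < 1
    have h1 : (1:ℝ) ≤ (n:ℝ) := by exact_mod_cast hn
    have hle : ‖z‖ ≤ Real.exp (-(π*τ.im)) := by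
      rw [habs]
      apply Real.exp_le_exp.mpr
      nlinarith [mul_pos (show (0:ℝ) < 2*(n:ℝ)-1 by linarith) hp]
    have hlb : 1 - ‖z‖ ≤ ‖1 - z‖ := by
      have := norm_sub_norm_le (1:ℂ) z
      simpa using this
    calc min (1 - Real.exp (-(π*τ.im))) (Real.exp (π*τ.im) - 1)
        ≤ 1 - Real.exp (-(π*τ.im)) := min_le_left _ _
      _ ≤ 1 - ‖z‖ := by linarith
      _ ≤ ‖1 - z‖ := hlb
  · -- n ≤ 0 : |z| ≥ exp(πτ.im) > 1
    have h1 : (n:ℝ) ≤ 0 := by exact_mod_cast (by omega : n ≤ 0)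
    have hge : Real.exp (π*τ.im) ≤ ‖z‖ := by
      rw [habs]
      apply Real.exp_le_exp.mpr
      nlinarith [mul_nonneg (show (0:ℝ) ≤ 2*(0-(n:ℝ)) by linarith) hp.le]
    have hlb : ‖z‖ - 1 ≤ ‖1 - z‖ := by
      have := norm_sub_norm_le z (1:ℂ)
      rw [← norm_sub_rev (1:ℂ) z] at this
      simpa using this
    calc min (1 - Real.exp (-(π*τ.im))) (Real.exp (π*τ.im) - 1)
        ≤ Real.exp (π*τ.im) - 1 := min_le_right _ _
      _ ≤ ‖z‖ - 1 := by linarith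
      _ ≤ ‖1 - z‖ := hlb

lemma delta_pos (τ : ℂ) (hτ : 0 < τ.im) :
    0 < min (1 - Real.exp (-(π*τ.im))) (Real.exp (π*τ.im) - 1) := by
  have hp : 0 < π*τ.im := mul_pos Real.pi_pos hτ
  apply lt_min
  · have : Real.exp (-(π*τ.im)) < 1 := Real.exp_lt_one_iff.mpr (by linarith)
    linarith
  · have : 1 < Real.exp (π*τ.im) := Real.one_lt_exp_iff.mpr hp
    linarith

lemma Fterm_norm_le (τ : ℂ) (hτ : 0 < τ.im) (n : ℤ) (t : ℝ) :
    ‖Fterm τ n t‖ ≤ (Real.exp (3*(π*τ.im))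
        * (min (1 - Real.exp (-(π*τ.im))) (Real.exp (π*τ.im) - 1))⁻¹)
      * Real.exp (-(2*(π*τ.im))) ^ n.natAbs := by
  have hp : 0 < π*τ.im := mul_pos Real.pi_pos hτ
  have hδ := delta_pos τ hτ
  set δ := min (1 - Real.exp (-(π*τ.im))) (Real.exp (π*τ.im) - 1) with hδdef
  rw [Fterm_eq]
  rw [norm_mul, norm_div, norm_pow,
    abs_exp_two_pi_I, one_pow, abs_kk]
  have hkk : Real.exp (-((2*(n:ℝ)*((n:ℝ)+1)-1) * (π * τ.im)))
      ≤ Real.exp (3*(π*τ.im)) * Real.exp (-(2*(π*τ.im))) ^ n.natAbs := by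
    rw [← Real.exp_nat_mul, ← Real.exp_add]
    apply Real.exp_le_exp.mpr
    have hint : (n.natAbs : ℤ) - 1 ≤ n*(n+1) := by
      rcases le_or_gt 0 n with h | h
      · rw [Int.natAbs_of_nonneg h]; nlinarith
      · rw [show (n.natAbs : ℤ) = -n from by omega]; nlinarith [sq_nonneg (n+1)]
    have hreal : (n.natAbs : ℝ) - 1 ≤ (n:ℝ)*((n:ℝ)+1) := by exact_mod_cast hint
    nlinarith
  have hdlow := denom_lower τ hτ n t
  have hdpos : (0:ℝ) < ‖1 - cc τ n * Complex.exp (2*(π:ℂ)*Complex.I*t)‖ :=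
    lt_of_lt_of_le hδ hdlow
  calc Real.exp (-((2*(n:ℝ)*((n:ℝ)+1)-1) * (π * τ.im)))
        * (1 / ‖1 - cc τ n * Complex.exp (2*(π:ℂ)*Complex.I*t)‖)
      ≤ (Real.exp (3*(π*τ.im)) * Real.exp (-(2*(π*τ.im))) ^ n.natAbs) * δ⁻¹ := by
        apply mul_le_mul hkk _ (by positivity) (by positivity)
        rw [one_div]
        exact inv_anti₀ hδ hdlow
    _ = (Real.exp (3*(π*τ.im)) * δ⁻¹) * Real.exp (-(2*(π*τ.im))) ^ n.natAbs := by ring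

lemma Fterm_integrableOn (τ : ℂ) (hτ : 0 < τ.im) (n : ℤ) :
    MeasureTheory.IntegrableOn (Fterm τ n) (Set.Ioc (-(1:ℝ)/2) (1/2)) := by
  have heq : Fterm τ n = fun t : ℝ => kk τ n *
      (Complex.exp (2*(π:ℂ)*Complex.I*t)^3 /
        (1 - cc τ n * Complex.exp (2*(π:ℂ)*Complex.I*t))) := funext (Fterm_eq τ n)
  rw [heq]
  have hcontE : Continuous fun t : ℝ => Complex.exp (2*(π:ℂ)*Complex.I*t) :=
    Complex.continuous_exp.comp (by continuity)
  exact (continuous_const.mul ((hcontE.pow 3).div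
    (continuous_const.sub (continuous_const.mul hcontE)) (cc_x_ne τ hτ n))).integrableOn_Ioc

lemma Fterm_summable_integral_norm (τ : ℂ) (hτ : 0 < τ.im) :
    Summable fun n : ℤ => ∫ t in Set.Ioc (-(1:ℝ)/2) (1/2), ‖Fterm τ n t‖ := by
  set K := Real.exp (3*(π*τ.im))
      * (min (1 - Real.exp (-(π*τ.im))) (Real.exp (π*τ.im) - 1))⁻¹ with hK
  set r := Real.exp (-(2*(π*τ.im))) with hr
  have hr0 : (0:ℝ) ≤ r := Real.exp_nonneg _
  have hr1 : r < 1 := Real.exp_lt_one_iff.mpr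
    (by nlinarith [mul_pos Real.pi_pos hτ])
  have hgeo : Summable fun n : ℤ => K * r ^ n.natAbs := by
    apply Summable.mul_left
    apply Summable.of_nat_of_neg
    · simpa using summable_geometric_of_lt_one hr0 hr1
    · simpa using summable_geometric_of_lt_one hr0 hr1
  apply Summable.of_nonneg_of_le
    (fun n => MeasureTheory.integral_nonneg (fun t => norm_nonneg _)) _ hgeo
  intro n
  have hbd : ∀ t ∈ Set.Ioc (-(1:ℝ)/2) (1/2), ‖Fterm τ n t‖ ≤ K * r ^ n.natAbs :=
    fun t _ => Fterm_norm_le τ hτ n t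
  calc (∫ t in Set.Ioc (-(1:ℝ)/2) (1/2), ‖Fterm τ n t‖)
      ≤ ∫ _ in Set.Ioc (-(1:ℝ)/2) (1/2), K * r ^ n.natAbs := by
        apply MeasureTheory.setIntegral_mono_on
          (Fterm_integrableOn τ hτ n).norm
          (MeasureTheory.integrableOn_const measure_Ioc_lt_top.ne)
          measurableSet_Ioc hbd
    _ = K * r ^ n.natAbs := by
        rw [MeasureTheory.setIntegral_const]
        rw [Real.volume_real_Ioc]
        norm_num

/-- For `τ` in the upper half plane with `q = e^{2πiτ}`, the partial theta function satisfies
`∑_{n≥1} q^{n²} = -∫_{-1/2}^{1/2} e^{4πit} A_2(t - τ/2, 0; τ) dt`. -/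
theorem partial_theta_appell_lerch (τ : ℂ) (hτ : 0 < τ.im) :
    (∑' n : ℕ, Complex.exp (2 * (π : ℂ) * Complex.I * τ) ^ ((n + 1) ^ 2))
      = -∫ t in (-(1 : ℝ)/2)..(1/2),
          Complex.exp (4 * (π : ℂ) * Complex.I * (t : ℂ)) * appellLerch2 ((t : ℂ) - τ/2) τ := by
  have h12 : (-(1:ℝ)/2) ≤ 1/2 := by norm_num
  have hinteg : ∀ t : ℝ,
      Complex.exp (4*(π:ℂ)*Complex.I*(t:ℂ)) * appellLerch2 ((t:ℂ) - τ/2) τ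
        = ∑' n : ℤ, Fterm τ n t := by
    intro t
    simp only [appellLerch2, Fterm]
    rw [← tsum_mul_left, ← tsum_mul_left]
  have hswap : (∫ t in Set.Ioc (-(1:ℝ)/2) (1/2), ∑' n : ℤ, Fterm τ n t)
      = ∑' n : ℤ, ∫ t in Set.Ioc (-(1:ℝ)/2) (1/2), Fterm τ n t :=
    (MeasureTheory.integral_tsum_of_summable_integral_norm
      (fun n => Fterm_integrableOn τ hτ n)
      (Fterm_summable_integral_norm τ hτ)).symm
  have hIoc : ∀ n : ℤ, (∫ t in Set.Ioc (-(1:ℝ)/2) (1/2), Fterm τ n t)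
      = ∫ t in (-(1:ℝ)/2)..(1/2), Fterm τ n t :=
    fun n => (intervalIntegral.integral_of_le h12).symm
  have hsupp : Function.support (fun n : ℤ => ∫ t in Set.Ioc (-(1:ℝ)/2) (1/2), Fterm τ n t)
      ⊆ Set.range (fun k : ℕ => -(k:ℤ)) := by
    intro n hn
    rcases le_or_gt n 0 with h | h
    · exact ⟨n.natAbs, show -((n.natAbs : ℤ)) = n by omega⟩
    · exfalso
      apply hn
      show (∫ t in Set.Ioc (-(1:ℝ)/2) (1/2), Fterm τ n t) = 0
      rw [hIoc n]
      exact integral_Fterm_pos τ hτ n h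
  have hinj : Function.Injective (fun k : ℕ => -(k:ℤ)) := by
    intro a b hab; simpa using hab
  have hval : ∀ k : ℕ, (∫ t in Set.Ioc (-(1:ℝ)/2) (1/2), Fterm τ (-(k:ℤ)) t)
      = -(Complex.exp (2*(π:ℂ)*Complex.I*τ) ^ ((k+1)^2)) := by
    intro k; rw [hIoc]; exact integral_Fterm_neg τ hτ k
  have hmain : (∫ t in (-(1:ℝ)/2)..(1/2),
      Complex.exp (4*(π:ℂ)*Complex.I*(t:ℂ)) * appellLerch2 ((t:ℂ) - τ/2) τ)
      = -(∑' n : ℕ, Complex.exp (2*(π:ℂ)*Complex.I*τ) ^ ((n+1)^2)) := by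
    rw [intervalIntegral.integral_congr (g := fun t : ℝ => ∑' n : ℤ, Fterm τ n t)
      (fun t _ => hinteg t)]
    rw [intervalIntegral.integral_of_le h12, hswap, ← hinj.tsum_eq hsupp]
    simp only [hval]
    exact tsum_neg
  rw [hmain, neg_neg]
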